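/- (Eckart–Young for matrices, spectral norm) Let A ∈ ℝ^{m×n} have singular value decomposition with singular values σ₁ ≥ σ₂ ≥ ... . For any k < rank(A), the best approximation of A in spectral norm by matrices of rank at most k has error σ_{k+1}: min_{rank(B) ≤ k} ‖A − B‖₂ = σ_{k+1}, attained by the truncated SVD. -/

import Mathlib

open scoped RealInnerProductSpace

/-- The spectral (ℓ²-operator) norm `‖A‖₂` of a real matrix: the operator norm of the
induced linear map between Euclidean spaces. -/
noncomputable def spectralNorm' {m n : ℕ} (A : Matrix (Fin m) (Fin n) ℝ) : ℝ :=
  ‖LinearMap.toContinuousLinearMap (Matrix.toEuclideanLin A)‖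

lemma norm_sq_orthonormal_sum {ι : Type*} [Fintype ι] {E : Type*} [NormedAddCommGroup E]
    [InnerProductSpace ℝ E] {u : ι → E} (hu : Orthonormal ℝ u) (c : ι → ℝ) :
    ‖∑ i, c i • u i‖ ^ 2 = ∑ i, c i ^ 2 := by
  rw [← real_inner_self_eq_norm_sq, sum_inner]
  refine Finset.sum_congr rfl fun i _ => ?_
  rw [real_inner_smul_left, hu.inner_right_fintype, sq]

lemma mul_le_of_sq {a b d : ℝ} (ha : 0 ≤ a) (hb : 0 ≤ b) (hd : 0 ≤ d)
    (h : a ^ 2 * b ^ 2 ≤ d ^ 2) : a * b ≤ d := by nlinarith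

lemma ey_lower {m n p : ℕ} (A : Matrix (Fin m) (Fin n) ℝ)
    (σ : Fin p → ℝ) (u : Fin p → EuclideanSpace ℝ (Fin m))
    (v : Fin p → EuclideanSpace ℝ (Fin n))
    (hσ0 : ∀ i, 0 ≤ σ i) (hσa : ∀ i j : Fin p, i ≤ j → σ j ≤ σ i)
    (hu : Orthonormal ℝ u) (hv : Orthonormal ℝ v)
    (hsvd : ∀ x : EuclideanSpace ℝ (Fin n),
      Matrix.toEuclideanLin A x = ∑ i : Fin p, (σ i * ⟪x, v i⟫) • u i)
    (k : ℕ) (hkp : k < p) (hkn : k < n)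
    (B : Matrix (Fin m) (Fin n) ℝ) (hB : B.rank ≤ k) :
    σ ⟨k, hkp⟩ ≤ spectralNorm' (A - B) := by
  classical
  set T := Matrix.toEuclideanLin B with hT
  have hrange : Module.finrank ℝ (LinearMap.range T) ≤ k := by
    have : B.rank = Module.finrank ℝ (LinearMap.range T) := by
      rw [Matrix.rank_eq_finrank_range_toLin B (PiLp.basisFun 2 ℝ (Fin m))
        (PiLp.basisFun 2 ℝ (Fin n))]
      rfl
    omega
  have hrn : Module.finrank ℝ (LinearMap.range T) + Module.finrank ℝ (LinearMap.ker T) = n := by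
    rw [LinearMap.finrank_range_add_finrank_ker T, finrank_euclideanSpace_fin]
  set w : Fin (k+1) → EuclideanSpace ℝ (Fin n) := fun i => v (Fin.castLE hkp i) with hwdef
  have hw : Orthonormal ℝ w := hv.comp _ (Fin.castLE_injective _)
  set W : Submodule ℝ (EuclideanSpace ℝ (Fin n)) := Submodule.span ℝ (Set.range w) with hWdef
  have hWrank : Module.finrank ℝ W = k + 1 := by
    rw [finrank_span_eq_card hw.linearIndependent]
    simp
  have hinf : 0 < Module.finrank ℝ ↥(W ⊓ LinearMap.ker T) := by
    have h1 := Submodule.finrank_sup_add_finrank_inf_eq W (LinearMap.ker T)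
    have h2 : Module.finrank ℝ ↥(W ⊔ LinearMap.ker T) ≤ n := by
      have := Submodule.finrank_le (W ⊔ LinearMap.ker T)
      rwa [finrank_euclideanSpace_fin] at this
    omega
  have : Nontrivial ↥(W ⊓ LinearMap.ker T) := Module.finrank_pos_iff.mp hinf
  obtain ⟨⟨x, hx⟩, hx0⟩ := exists_ne (0 : ↥(W ⊓ LinearMap.ker T))
  have hxne : x ≠ 0 := by simpa [Subtype.ext_iff] using hx0
  obtain ⟨hxW, hxK⟩ := Submodule.mem_inf.mp hx
  rw [hWdef, Submodule.mem_span_range_iff_exists_fun] at hxW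
  obtain ⟨c, hc⟩ := hxW
  set c' : Fin p → ℝ := fun j => if h : (j : ℕ) < k + 1 then c ⟨j, h⟩ else 0 with hc'def
  have hrep : ∑ j : Fin p, c' j • v j = x := by
    rw [← hc]
    rw [← Finset.sum_subset (Finset.subset_univ
      (Finset.univ.map (Fin.castLEEmb hkp))) (by
        intro j _ hj
        have hjk : ¬ (j : ℕ) < k + 1 := by
          intro hlt
          exact hj (by
            simp only [Finset.mem_map, Finset.mem_univ, true_and]
            exact ⟨⟨j, hlt⟩, rfl⟩)
        simp [hc'def, mt Nat.lt_succ_of_le hjk])]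
    rw [Finset.sum_map]
    refine Finset.sum_congr rfl fun i _ => ?_
    have : ((Fin.castLE hkp i : Fin p) : ℕ) < k + 1 := by simpa using i.isLt
    simp [hc'def, hwdef, this, Nat.lt_succ_iff.mp i.isLt]
  have hcx : ∀ j : Fin p, (⟪x, v j⟫ : ℝ) = c' j := by
    intro j
    rw [← hrep, real_inner_comm, hv.inner_right_fintype]
  have hAx : Matrix.toEuclideanLin A x = ∑ j : Fin p, (σ j * c' j) • u j := by
    rw [hsvd x]
    exact Finset.sum_congr rfl fun j _ => by rw [hcx j]
  have hnAx : ‖Matrix.toEuclideanLin A x‖ ^ 2 = ∑ j : Fin p, (σ j * c' j) ^ 2 := by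
    rw [hAx]; exact norm_sq_orthonormal_sum hu _
  have hnx : ‖x‖ ^ 2 = ∑ j : Fin p, (c' j) ^ 2 := by
    rw [← hrep]; exact norm_sq_orthonormal_sum hv _
  have key : (σ ⟨k, hkp⟩) ^ 2 * ‖x‖ ^ 2 ≤ ‖Matrix.toEuclideanLin A x‖ ^ 2 := by
    rw [hnAx, hnx, Finset.mul_sum]
    refine Finset.sum_le_sum fun j _ => ?_
    by_cases hj : (j : ℕ) < k + 1
    · have h1 : σ ⟨k, hkp⟩ ≤ σ j := hσa j ⟨k, hkp⟩ (by
        simpa [Fin.le_def] using Nat.lt_succ_iff.mp hj)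
      calc σ ⟨k, hkp⟩ ^ 2 * c' j ^ 2 ≤ σ j ^ 2 * c' j ^ 2 := by
            have h3 := hσ0 ⟨k, hkp⟩
            exact mul_le_mul_of_nonneg_right (by nlinarith) (sq_nonneg _)
        _ = (σ j * c' j) ^ 2 := (mul_pow _ _ _).symm
    · simp [hc'def, hj, mt Nat.lt_succ_of_le hj]
  have hxpos : 0 < ‖x‖ := norm_pos_iff.mpr hxne
  have hABx : Matrix.toEuclideanLin (A - B) x = Matrix.toEuclideanLin A x := by
    have hsub : Matrix.toEuclideanLin (A - B) = Matrix.toEuclideanLin A - Matrix.toEuclideanLin B :=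
      map_sub Matrix.toEuclideanLin A B
    rw [hsub, LinearMap.sub_apply, ← hT, LinearMap.mem_ker.mp hxK, sub_zero]
  have hle : σ ⟨k, hkp⟩ * ‖x‖ ≤ ‖Matrix.toEuclideanLin (A - B) x‖ := by
    rw [hABx]
    exact mul_le_of_sq (hσ0 ⟨k, hkp⟩) (norm_nonneg x) (norm_nonneg _) key
  have hop : ‖Matrix.toEuclideanLin (A - B) x‖ ≤ spectralNorm' (A - B) * ‖x‖ := by
    have := (LinearMap.toContinuousLinearMap (Matrix.toEuclideanLin (A - B))).le_opNorm x
    simpa [spectralNorm'] using this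
  have := hle.trans hop
  exact le_of_mul_le_mul_right this hxpos


lemma le_mul_of_sq {a b d : ℝ} (ha : 0 ≤ a) (hb : 0 ≤ b) (hd : 0 ≤ d)
    (h : d ^ 2 ≤ a ^ 2 * b ^ 2) : d ≤ a * b := by
  nlinarith [mul_nonneg ha hb, sq_nonneg (d - a * b), sq_nonneg (d + a * b)]

lemma ey_attain {m n p : ℕ} (A : Matrix (Fin m) (Fin n) ℝ)
    (σ : Fin p → ℝ) (u : Fin p → EuclideanSpace ℝ (Fin m))
    (v : Fin p → EuclideanSpace ℝ (Fin n))
    (hσ0 : ∀ i, 0 ≤ σ i) (hσa : ∀ i j : Fin p, i ≤ j → σ j ≤ σ i)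
    (hu : Orthonormal ℝ u) (hv : Orthonormal ℝ v)
    (hsvd : ∀ x : EuclideanSpace ℝ (Fin n),
      Matrix.toEuclideanLin A x = ∑ i : Fin p, (σ i * ⟪x, v i⟫) • u i)
    (k : ℕ) (hkp : k < p)
    (B : Matrix (Fin m) (Fin n) ℝ)
    (hBx : ∀ x : EuclideanSpace ℝ (Fin n), Matrix.toEuclideanLin B x
            = ∑ i : Fin p, (if (i : ℕ) < k then σ i * ⟪x, v i⟫ else 0) • u i) :
    spectralNorm' (A - B) = σ ⟨k, hkp⟩ := by
  classical
  have hABx : ∀ x : EuclideanSpace ℝ (Fin n), Matrix.toEuclideanLin (A - B) x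
      = ∑ i : Fin p, (if (i : ℕ) < k then 0 else σ i * ⟪x, v i⟫) • u i := by
    intro x
    have hsub : Matrix.toEuclideanLin (A - B) = Matrix.toEuclideanLin A - Matrix.toEuclideanLin B :=
      map_sub Matrix.toEuclideanLin A B
    rw [hsub, LinearMap.sub_apply, hsvd x, hBx x, ← Finset.sum_sub_distrib]
    refine Finset.sum_congr rfl fun i _ => ?_
    rw [← sub_smul]
    by_cases h : (i : ℕ) < k <;> simp [h]
  have hbound : ∀ x : EuclideanSpace ℝ (Fin n),
      ‖Matrix.toEuclideanLin (A - B) x‖ ≤ σ ⟨k, hkp⟩ * ‖x‖ := by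
    intro x
    refine le_mul_of_sq (hσ0 _) (norm_nonneg x) (norm_nonneg _) ?_
    rw [hABx x, norm_sq_orthonormal_sum hu]
    have step1 : ∑ i : Fin p, (if (i : ℕ) < k then 0 else σ i * ⟪x, v i⟫) ^ 2
        ≤ ∑ i : Fin p, σ ⟨k, hkp⟩ ^ 2 * ⟪x, v i⟫ ^ 2 := by
      refine Finset.sum_le_sum fun i _ => ?_
      by_cases h : (i : ℕ) < k
      · rw [if_pos h]
        have hpos : (0:ℝ) ≤ σ ⟨k, hkp⟩ ^ 2 * ⟪x, v i⟫ ^ 2 := by positivity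
        simpa using hpos
      · simp only [if_neg h]
        have h1 : σ i ≤ σ ⟨k, hkp⟩ := hσa ⟨k, hkp⟩ i (by
          simp [Fin.le_def]; omega)
        have h2 := hσ0 i
        calc (σ i * ⟪x, v i⟫) ^ 2 = σ i ^ 2 * ⟪x, v i⟫ ^ 2 := mul_pow _ _ _
          _ ≤ σ ⟨k, hkp⟩ ^ 2 * ⟪x, v i⟫ ^ 2 :=
              mul_le_mul_of_nonneg_right (by nlinarith) (sq_nonneg _)
    have step2 : ∑ i : Fin p, ⟪x, v i⟫ ^ 2 ≤ ‖x‖ ^ 2 := by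
      have hb := hv.sum_inner_products_le (s := Finset.univ) x
      calc ∑ i : Fin p, ⟪x, v i⟫ ^ 2 = ∑ i : Fin p, ‖⟪v i, x⟫‖ ^ 2 := by
            refine Finset.sum_congr rfl fun i _ => ?_
            rw [real_inner_comm, Real.norm_eq_abs, sq_abs]
        _ ≤ ‖x‖ ^ 2 := hb
    calc ∑ i : Fin p, (if (i : ℕ) < k then 0 else σ i * ⟪x, v i⟫) ^ 2
        ≤ ∑ i : Fin p, σ ⟨k, hkp⟩ ^ 2 * ⟪x, v i⟫ ^ 2 := step1
      _ = σ ⟨k, hkp⟩ ^ 2 * ∑ i : Fin p, ⟪x, v i⟫ ^ 2 := (Finset.mul_sum _ _ _).symm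
      _ ≤ σ ⟨k, hkp⟩ ^ 2 * ‖x‖ ^ 2 := mul_le_mul_of_nonneg_left step2 (sq_nonneg _)
  have hone : Matrix.toEuclideanLin (A - B) (v ⟨k, hkp⟩) = σ ⟨k, hkp⟩ • u ⟨k, hkp⟩ := by
    rw [hABx]
    rw [Finset.sum_eq_single (⟨k, hkp⟩ : Fin p)]
    · have h1 : (⟪v ⟨k, hkp⟩, v ⟨k, hkp⟩⟫ : ℝ) = 1 := by
        have := orthonormal_iff_ite.mp hv ⟨k, hkp⟩ ⟨k, hkp⟩
        simpa using this
      simp [h1, hv.1 ⟨k, hkp⟩]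
    · intro j _ hj
      have h0 : (⟪v ⟨k, hkp⟩, v j⟫ : ℝ) = 0 := by
        have := orthonormal_iff_ite.mp hv ⟨k, hkp⟩ j
        simpa [hj.symm] using this
      by_cases h : (j : ℕ) < k <;> simp [h, h0]
    · simp
  apply le_antisymm
  · refine ContinuousLinearMap.opNorm_le_bound _ (hσ0 _) fun x => ?_
    simpa using hbound x
  · have h1 : ‖(LinearMap.toContinuousLinearMap (Matrix.toEuclideanLin (A - B))) (v ⟨k, hkp⟩)‖
        = σ ⟨k, hkp⟩ := by
      simp only [LinearMap.coe_toContinuousLinearMap', hone, norm_smul, hu.1, Real.norm_eq_abs]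
      rw [abs_of_nonneg (hσ0 _), mul_one]
    rw [← h1]
    exact ContinuousLinearMap.unit_le_opNorm _ _ (le_of_eq (hv.1 _))


/-- Eckart–Young for matrices, spectral norm.
Let `A ∈ ℝ^{m×n}` have singular value decomposition
`A x = Σ_{i<p} σ i ⟪x, v i⟫ u i` with `p = min m n`, singular values
`σ 0 ≥ σ 1 ≥ ⋯ ≥ 0` and orthonormal left/right singular vectors `u i`, `v i`.
For any `k < rank A`, the best approximation of `A` in spectral norm by matrices of
rank at most `k` has error `σ k` (the (k+1)-st singular value, 0-based):
`min_{rank B ≤ k} ‖A − B‖₂ = σ k` (stated as `IsLeast`), and the minimum is attained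
by the truncated SVD `A_k = Σ_{i<k} σ i u i v iᵀ`. -/
theorem eckart_young_spectral_norm
    {m n : ℕ} (A : Matrix (Fin m) (Fin n) ℝ)
    (p : ℕ) (hp : p = min m n)
    (σ : Fin p → ℝ) (u : Fin p → EuclideanSpace ℝ (Fin m))
    (v : Fin p → EuclideanSpace ℝ (Fin n))
    (hσ0 : ∀ i, 0 ≤ σ i) (hσa : ∀ i j : Fin p, i ≤ j → σ j ≤ σ i)
    (hu : Orthonormal ℝ u) (hv : Orthonormal ℝ v)
    (hsvd : ∀ x : EuclideanSpace ℝ (Fin n),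
      Matrix.toEuclideanLin A x = ∑ i : Fin p, (σ i * ⟪x, v i⟫) • u i)
    (k : ℕ) (hk : k < A.rank) (hkp : k < p) :
    IsLeast {r : ℝ | ∃ B : Matrix (Fin m) (Fin n) ℝ, B.rank ≤ k ∧
        r = spectralNorm' (A - B)} (σ ⟨k, hkp⟩)
    ∧ ∃ B : Matrix (Fin m) (Fin n) ℝ,
        (∀ x : EuclideanSpace ℝ (Fin n), Matrix.toEuclideanLin B x
            = ∑ i : Fin p, (if (i : ℕ) < k then σ i * ⟪x, v i⟫ else 0) • u i)
        ∧ B.rank ≤ k ∧ spectralNorm' (A - B) = σ ⟨k, hkp⟩ := by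
  classical
  have hkn : k < n := by omega
  -- construct the truncated SVD matrix
  set g : EuclideanSpace ℝ (Fin n) →ₗ[ℝ] EuclideanSpace ℝ (Fin m) :=
    ∑ i : Fin p, (if (i : ℕ) < k then σ i else 0) •
      ((LinearMap.toSpanSingleton ℝ _ (u i)).comp (innerSL ℝ (v i)).toLinearMap) with hg
  set B₀ : Matrix (Fin m) (Fin n) ℝ := Matrix.toEuclideanLin.symm g with hB₀
  have hB₀x : ∀ x : EuclideanSpace ℝ (Fin n), Matrix.toEuclideanLin B₀ x
      = ∑ i : Fin p, (if (i : ℕ) < k then σ i * ⟪x, v i⟫ else 0) • u i := by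
    intro x
    rw [hB₀, LinearEquiv.apply_symm_apply, hg]
    simp only [LinearMap.sum_apply, LinearMap.smul_apply, LinearMap.comp_apply,
      ContinuousLinearMap.coe_coe, innerSL_apply_apply, LinearMap.toSpanSingleton_apply]
    refine Finset.sum_congr rfl fun i _ => ?_
    by_cases h : (i : ℕ) < k <;> simp [h, smul_smul, mul_comm, real_inner_comm]
  have hB₀rank : B₀.rank ≤ k := by
    have hr : B₀.rank = Module.finrank ℝ (LinearMap.range (Matrix.toEuclideanLin B₀)) := by
      rw [Matrix.rank_eq_finrank_range_toLin B₀ (PiLp.basisFun 2 ℝ (Fin m))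
        (PiLp.basisFun 2 ℝ (Fin n))]
      rfl
    rw [hr]
    set S : Finset (EuclideanSpace ℝ (Fin m)) :=
      (Finset.univ.filter (fun i : Fin p => (i : ℕ) < k)).image u with hS
    have hsub : LinearMap.range (Matrix.toEuclideanLin B₀) ≤ Submodule.span ℝ (S : Set _) := by
      rintro y ⟨x, rfl⟩
      rw [hB₀x]
      refine Submodule.sum_mem _ fun i _ => ?_
      by_cases h : (i : ℕ) < k
      · exact Submodule.smul_mem _ _ (Submodule.subset_span (by
          simp only [hS, Finset.coe_image, Set.mem_image, Finset.mem_coe, Finset.mem_filter,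
            Finset.mem_univ, true_and]
          exact ⟨i, h, rfl⟩))
      · simp [h]
    have hle := Submodule.finrank_mono hsub
    have hsp : Module.finrank ℝ (Submodule.span ℝ (S : Set (EuclideanSpace ℝ (Fin m)))) ≤ S.card :=
      finrank_span_finset_le_card S
    have hcard : S.card ≤ k := by
      refine le_trans (Finset.card_image_le) ?_
      have h1 : (Finset.univ.filter (fun i : Fin p => (i : ℕ) < k)).card
          ≤ (Finset.range k).card := by
        refine Finset.card_le_card_of_injOn (fun i : Fin p => (i : ℕ)) ?_ ?_
        · intro a ha
          simp only [Finset.mem_coe, Finset.mem_filter] at ha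
          simpa using ha.2
        · intro a _ b _ hab
          exact Fin.ext hab
      simpa using h1
    omega
  have hval : spectralNorm' (A - B₀) = σ ⟨k, hkp⟩ :=
    ey_attain A σ u v hσ0 hσa hu hv hsvd k hkp B₀ hB₀x
  refine ⟨⟨⟨B₀, hB₀rank, hval.symm⟩, ?_⟩, B₀, hB₀x, hB₀rank, hval⟩
  rintro r ⟨B, hBrank, rfl⟩
  exact ey_lower A σ u v hσ0 hσa hu hv hsvd k hkp hkn B hBrank
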